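/- Let n ≥ 3, a > 0, θ ∈ (0, π), and set u(t) = (a² + t² − 2at cos θ)^{(2−n)/2} for t > 0. If (∫_{1/2}^{1} u(t)^{2/(n−2)} dt)/(∫_{1/4}^{1/2} u(t)^{2/(n−2)} dt) ≥ 3/2, then (∫_{1/4}^{1/2} u(t)^{2/(n−2)} dt)/(∫_{1/8}^{1/4} u(t)^{2/(n−2)} dt) > 3/2. -/

import Mathlib

open Set MeasureTheory intervalIntegral

set_option maxHeartbeats 1000000 in
theorem stmt_10 (n : ℕ) (hn : 3 ≤ n) (a θ : ℝ) (ha : 0 < a)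
    (hθ₁ : 0 < θ) (hθ₂ : θ < Real.pi)
    (hF : (∫ t in (1/2 : ℝ)..(1 : ℝ),
            ((a^2 + t^2 - 2*a*t*Real.cos θ) ^ (((2:ℝ) - n)/2)) ^ ((2:ℝ) / ((n:ℝ) - 2))) /
          (∫ t in (1/4 : ℝ)..(1/2 : ℝ),
            ((a^2 + t^2 - 2*a*t*Real.cos θ) ^ (((2:ℝ) - n)/2)) ^ ((2:ℝ) / ((n:ℝ) - 2)))
          ≥ 3/2) :
    (∫ t in (1/4 : ℝ)..(1/2 : ℝ),
        ((a^2 + t^2 - 2*a*t*Real.cos θ) ^ (((2:ℝ) - n)/2)) ^ ((2:ℝ) / ((n:ℝ) - 2))) /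
      (∫ t in (1/8 : ℝ)..(1/4 : ℝ),
        ((a^2 + t^2 - 2*a*t*Real.cos θ) ^ (((2:ℝ) - n)/2)) ^ ((2:ℝ) / ((n:ℝ) - 2)))
      > 3/2 := by
  have hn3 : (3:ℝ) ≤ (n:ℝ) := by exact_mod_cast hn
  have hn2 : ((n:ℝ) - 2) ≠ 0 := by linarith
  set c := Real.cos θ with hcdef
  set s := Real.sin θ with hsdef
  have hspos : 0 < s := Real.sin_pos_of_pos_of_lt_pi hθ₁ hθ₂
  have hcs : c^2 + s^2 = 1 := by rw [hcdef, hsdef]; exact Real.cos_sq_add_sin_sq θ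
  have hQ : ∀ x : ℝ, 0 < a^2 + x^2 - 2*a*x*c := by
    intro x
    nlinarith [sq_nonneg (x - a*c), mul_pos (mul_pos ha hspos) (mul_pos ha hspos)]
  have hsimp : ∀ x : ℝ, ((a^2 + x^2 - 2*a*x*c) ^ (((2:ℝ) - n)/2)) ^ ((2:ℝ) / ((n:ℝ) - 2))
      = (a^2 + x^2 - 2*a*x*c)⁻¹ := by
    intro x
    rw [← Real.rpow_mul (hQ x).le]
    rw [show (((2:ℝ) - n)/2) * ((2:ℝ) / ((n:ℝ) - 2)) = -1 by
      field_simp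
      ring]
    exact Real.rpow_neg_one _
  simp only [hsimp] at hF ⊢
  set f : ℝ → ℝ := fun x => (a^2 + x^2 - 2*a*x*c)⁻¹ with hfdef
  have hcont : Continuous f := by
    apply Continuous.inv₀
    · continuity
    · exact fun x => (hQ x).ne'
  have hcont2 : Continuous fun u : ℝ => f (2*u) :=
    hcont.comp (continuous_const.mul continuous_id)
  have hconth : Continuous fun u : ℝ => f (u/2) :=
    hcont.comp (continuous_id.div_const 2)
  have hJ2pos : 0 < ∫ t in (1/4:ℝ)..(1/2:ℝ), f t :=
    intervalIntegral_pos_of_pos_on (hcont.intervalIntegrable _ _)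
      (fun x _ => inv_pos.2 (hQ x)) (by norm_num)
  have hJ3pos : 0 < ∫ t in (1/8:ℝ)..(1/4:ℝ), f t :=
    intervalIntegral_pos_of_pos_on (hcont.intervalIntegrable _ _)
      (fun x _ => inv_pos.2 (hQ x)) (by norm_num)
  have hm2 : (a*c)^2 ≤ a^2 := by nlinarith [sq_nonneg (a*s)]
  -- substitution identities
  have hsub1 : (∫ u in (1/4:ℝ)..(1/2:ℝ), f (2*u))
      = (2:ℝ)⁻¹ * ∫ t in (1/2:ℝ)..(1:ℝ), f t := by
    rw [intervalIntegral.integral_comp_mul_left f (two_ne_zero)]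
    norm_num [smul_eq_mul]
  have hsub3 : (∫ u in (1/4:ℝ)..(1/2:ℝ), f (u/2))
      = 2 * ∫ t in (1/8:ℝ)..(1/4:ℝ), f t := by
    rw [intervalIntegral.integral_comp_div f (two_ne_zero)]
    norm_num [smul_eq_mul]
  rcases le_or_gt (a^2 + a*c) (1/2) with hcase | hcase
  · -- then (3/2) J2 - J1 > 0, contradicting hF
    exfalso
    have hmlt1 : a*c < 1 := by nlinarith
    have key : 0 < ∫ u in (1/4:ℝ)..(1/2:ℝ), ((3/2) * f u - 2 * f (2*u)) := by
      apply intervalIntegral_pos_of_pos_on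
      · exact (((hcont.intervalIntegrable _ _).const_mul _).sub
          ((hcont2.intervalIntegrable _ _).const_mul _))
      · intro x hx
        obtain ⟨hx1, hx2⟩ := hx
        have h1 := hQ x
        have h2 := hQ (2*x)
        rw [sub_pos, hfdef]
        simp only
        rw [← div_eq_mul_inv, ← div_eq_mul_inv, div_lt_div_iff₀ h2 h1]
        nlinarith [mul_pos (show (0:ℝ) < x - 1/4 by linarith)
          (show (0:ℝ) < 4*x + 1 - 2*(a*c) by linarith)]
      · norm_num
    rw [intervalIntegral.integral_sub ((hcont.intervalIntegrable _ _).const_mul _)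
        ((hcont2.intervalIntegrable _ _).const_mul _),
      intervalIntegral.integral_const_mul, intervalIntegral.integral_const_mul, hsub1] at key
    have hF' : (3/2 : ℝ) * ∫ t in (1/4:ℝ)..(1/2:ℝ), f t ≤ ∫ t in (1/2:ℝ)..(1:ℝ), f t :=
      (le_div_iff₀ hJ2pos).1 hF
    linarith
  · -- then J2 - (3/2) J3 > 0, giving the goal
    have key : 0 < ∫ u in (1/4:ℝ)..(1/2:ℝ), (f u - (3/4) * f (u/2)) := by
      apply intervalIntegral_pos_of_pos_on
      · exact ((hcont.intervalIntegrable _ _).sub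
          ((hconth.intervalIntegrable _ _).const_mul _))
      · intro x hx
        obtain ⟨hx1, hx2⟩ := hx
        have h1 := hQ x
        have h3 := hQ (x/2)
        rw [sub_pos, hfdef]
        simp only
        rw [← div_eq_mul_inv, show (a^2 + x^2 - 2*a*x*c)⁻¹ = 1/(a^2 + x^2 - 2*a*x*c) by
            rw [one_div],
          div_lt_div_iff₀ h3 h1]
        ring_nf
        rcases le_or_gt (a*c) (3/4) with hmc | hmc
        · nlinarith [mul_nonneg (show (0:ℝ) ≤ x - 1/4 by linarith)
            (show (0:ℝ) ≤ 1/2 - x by linarith),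
            mul_nonneg (show (0:ℝ) ≤ 3/4 - a*c by linarith)
            (show (0:ℝ) ≤ 1 - 2*x by linarith)]
        · nlinarith [mul_pos (show (0:ℝ) < a*c - x by linarith)
            (show (0:ℝ) < a*c + 3*x by linarith), sq_nonneg x, hm2]
      · norm_num
    rw [intervalIntegral.integral_sub (hcont.intervalIntegrable _ _)
        ((hconth.intervalIntegrable _ _).const_mul _),
      intervalIntegral.integral_const_mul, hsub3] at key
    rw [gt_iff_lt, lt_div_iff₀ hJ3pos]
    linarith
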